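/- The scalar curvature of (ℝ⁴, g̃), defined by τ = Σᵢⱼ g̃(R̃(eᵢ,eⱼ)eⱼ,eᵢ) (sum over i, j = 1,…,4 in the orthonormal frame {e₁,e₂,e₃,e₄}), equals −1 at every point. -/

import Mathlib

set_option maxHeartbeats 2000000

noncomputable section

/-- The left-invariant frame fields e₁,e₂,e₃,e₄ on ℝ⁴ (coordinates x,y,z,t = p 0,...,p 3). -/
def eVF (i : Fin 4) (p : Fin 4 → ℝ) : Fin 4 → ℝ :=
  ![![1, 0, 0, 0],
    ![p 3, 1, 0, 0],
    ![(p 3) ^ 2 / 2, p 3, 1, 0],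
    ![0, 0, 0, 1]] i

/-- The matrix of the metric g̃ at a point with last coordinate t. -/
def gMat (t : ℝ) : Matrix (Fin 4) (Fin 4) ℝ :=
  !![1, -t, t ^ 2 / 2, 0;
     -t, 1 + t ^ 2, -t * (1 + t ^ 2 / 2), 0;
     t ^ 2 / 2, -t * (1 + t ^ 2 / 2), 1 + t ^ 2 + t ^ 4 / 4, 0;
     0, 0, 0, 1]

/-- The metric g̃ as a bilinear form on each tangent space. -/
def gMet (p X Y : Fin 4 → ℝ) : ℝ :=
  ∑ i, ∑ j, gMat (p 3) i j * X i * Y j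

/-- Partial derivative in direction of the i-th coordinate. -/
def pd (i : Fin 4) (f : (Fin 4 → ℝ) → ℝ) (p : Fin 4 → ℝ) : ℝ :=
  deriv (fun s => f (Function.update p i s)) (p i)

/-- The Christoffel symbols Γᵏᵢⱼ of g̃. -/
def Chr (p : Fin 4 → ℝ) (k i j : Fin 4) : ℝ :=
  (1 / 2) * ∑ l, (gMat (p 3))⁻¹ k l *
    (pd i (fun q => gMat (q 3) j l) p + pd j (fun q => gMat (q 3) i l) p
      - pd l (fun q => gMat (q 3) i j) p)

/-- The Levi-Civita connection of g̃ in coordinates. -/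
def nabla (X Y : (Fin 4 → ℝ) → (Fin 4 → ℝ)) (p : Fin 4 → ℝ) : Fin 4 → ℝ :=
  fun k => (∑ i, X p i * pd i (fun q => Y q k) p)
    + ∑ i, ∑ j, Chr p k i j * X p i * Y p j

/-- Lie bracket of vector fields on ℝ⁴. -/
def bracket (X Y : (Fin 4 → ℝ) → (Fin 4 → ℝ)) (p : Fin 4 → ℝ) : Fin 4 → ℝ :=
  fderiv ℝ Y p (X p) - fderiv ℝ X p (Y p)

/-- The curvature tensor R̃(X,Y)Z = ∇̃_X ∇̃_Y Z − ∇̃_Y ∇̃_X Z − ∇̃_{[X,Y]} Z. -/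
def Riem (X Y Z : (Fin 4 → ℝ) → (Fin 4 → ℝ)) (p : Fin 4 → ℝ) : Fin 4 → ℝ :=
  nabla X (nabla Y Z) p - nabla Y (nabla X Z) p - nabla (bracket X Y) Z p


/-! ### Auxiliary explicit data -/

def Ef (t : ℝ) : Fin 4 → Fin 4 → ℝ :=
  ![![1, 0, 0, 0],
    ![t, 1, 0, 0],
    ![t ^ 2 / 2, t, 1, 0],
    ![0, 0, 0, 1]]

def Gd (t : ℝ) : Fin 4 → Fin 4 → ℝ :=
  ![![0, (-1), (1)*t, 0],
   ![(-1), (2)*t, (-1) + (-3/2)*t^2, 0],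
   ![(1)*t, (-1) + (-3/2)*t^2, (2)*t + (1)*t^3, 0],
   ![0, 0, 0, 0]]

def Gi (t : ℝ) : Matrix (Fin 4) (Fin 4) ℝ :=
  Matrix.of ![![(1) + (1)*t^2 + (1/4)*t^4, (1)*t + (1/2)*t^3, (1/2)*t^2, 0],
   ![(1)*t + (1/2)*t^3, (1) + (1)*t^2, (1)*t, 0],
   ![(1/2)*t^2, (1)*t, (1), 0],
   ![0, 0, 0, (1)]]

def Cf (t : ℝ) : Fin 4 → Fin 4 → Fin 4 → ℝ :=
  ![![![0, 0, 0, (-1/2)*t],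
   ![0, 0, 0, (-1/2) + (1/4)*t^2],
   ![0, 0, 0, 0],
   ![(-1/2)*t, (-1/2) + (1/4)*t^2, 0, 0]],
  ![![0, 0, 0, (-1/2)],
   ![0, 0, 0, 0],
   ![0, 0, 0, (-1/2) + (1/4)*t^2],
   ![(-1/2), 0, (-1/2) + (1/4)*t^2, 0]],
  ![![0, 0, 0, 0],
   ![0, 0, 0, (-1/2)],
   ![0, 0, 0, (1/2)*t],
   ![0, (-1/2), (1/2)*t, 0]],
  ![![0, (1/2), (-1/2)*t, 0],
   ![(1/2), (-1)*t, (1/2) + (3/4)*t^2, 0],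
   ![(-1/2)*t, (1/2) + (3/4)*t^2, (-1)*t + (-1/2)*t^3, 0],
   ![0, 0, 0, 0]]]

def Nf (t : ℝ) : Fin 4 → Fin 4 → Fin 4 → ℝ :=
  ![![![0, 0, 0, 0],
   ![0, 0, 0, (1/2)],
   ![0, 0, 0, 0],
   ![(-1/2)*t, (-1/2), 0, 0]],
  ![![0, 0, 0, (1/2)],
   ![0, 0, 0, 0],
   ![0, 0, 0, (1/2)],
   ![(-1/2) + (-1/4)*t^2, (-1/2)*t, (-1/2), 0]],
  ![![0, 0, 0, 0],
   ![0, 0, 0, (1/2)],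
   ![0, 0, 0, 0],
   ![(-1/2)*t, (-1/2), 0, 0]],
  ![![(-1/2)*t, (-1/2), 0, 0],
   ![(1/2) + (-1/4)*t^2, (-1/2)*t, (-1/2), 0],
   ![(1/2)*t, (1/2), 0, 0],
   ![0, 0, 0, 0]]]

def dN (t : ℝ) : Fin 4 → Fin 4 → Fin 4 → ℝ :=
  ![![![0, 0, 0, 0],
   ![0, 0, 0, 0],
   ![0, 0, 0, 0],
   ![(-1/2), 0, 0, 0]],
  ![![0, 0, 0, 0],
   ![0, 0, 0, 0],
   ![0, 0, 0, 0],
   ![(-1/2)*t, (-1/2), 0, 0]],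
  ![![0, 0, 0, 0],
   ![0, 0, 0, 0],
   ![0, 0, 0, 0],
   ![(-1/2), 0, 0, 0]],
  ![![(-1/2), 0, 0, 0],
   ![(-1/2)*t, (-1/2), 0, 0],
   ![(1/2), 0, 0, 0],
   ![0, 0, 0, 0]]]

def dE (t : ℝ) : Fin 4 → Fin 4 → ℝ :=
  ![![0, 0, 0, 0],
   ![(1), 0, 0, 0],
   ![(1)*t, (1), 0, 0],
   ![0, 0, 0, 0]]

def Bf (t : ℝ) : Fin 4 → Fin 4 → Fin 4 → ℝ :=
  ![![![0, 0, 0, 0],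
   ![0, 0, 0, 0],
   ![0, 0, 0, 0],
   ![0, 0, 0, 0]],
  ![![0, 0, 0, 0],
   ![0, 0, 0, 0],
   ![0, 0, 0, 0],
   ![(-1), 0, 0, 0]],
  ![![0, 0, 0, 0],
   ![0, 0, 0, 0],
   ![0, 0, 0, 0],
   ![(-1)*t, (-1), 0, 0]],
  ![![0, 0, 0, 0],
   ![(1), 0, 0, 0],
   ![(1)*t, (1), 0, 0],
   ![0, 0, 0, 0]]]

def Rf (t : ℝ) : Fin 4 → Fin 4 → Fin 4 → ℝ :=
  ![![![0, 0, 0, 0],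
   ![(1/4) + (1/8)*t^2, (1/4)*t, (1/4), 0],
   ![0, 0, 0, 0],
   ![(1/4) + (-1/8)*t^2, (-1/4)*t, (-1/4), 0]],
  ![![(1/4)*t, (1/4), 0, 0],
   ![0, 0, 0, 0],
   ![(1/4)*t, (1/4), 0, 0],
   ![(-1/2)*t, (-1/2), 0, 0]],
  ![![0, 0, 0, 0],
   ![(1/4) + (1/8)*t^2, (1/4)*t, (1/4), 0],
   ![0, 0, 0, 0],
   ![(-1/4) + (-3/8)*t^2, (-3/4)*t, (-3/4), 0]],
  ![![0, 0, 0, (1/4)],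
   ![0, 0, 0, (-1/2)],
   ![0, 0, 0, (-3/4)],
   ![0, 0, 0, 0]]]


lemma fin4cases (i : Fin 4) : i = 0 ∨ i = 1 ∨ i = 2 ∨ i = 3 := by
  revert i; decide

lemma deriv_cm (c t : ℝ) : deriv (fun s : ℝ => c * s) t = c := by
  simpa using ((hasDerivAt_id t).const_mul c).deriv

lemma deriv_mc (c t : ℝ) : deriv (fun s : ℝ => s * c) t = c := by
  simpa using ((hasDerivAt_id t).mul_const c).deriv

lemma deriv_cm' (c t : ℝ) : deriv (HMul.hMul c : ℝ → ℝ) t = c := deriv_cm c t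

lemma eVF_apply (b : Fin 4) (p : Fin 4 → ℝ) : eVF b p = Ef (p 3) b := by
  rcases fin4cases b with rfl | rfl | rfl | rfl <;> rfl

/-! ### Partial derivative lemmas -/

lemma pd_comp (F : ℝ → ℝ) (i : Fin 4) (p : Fin 4 → ℝ) :
    pd i (fun q => F (q 3)) p = if i = 3 then deriv F (p 3) else 0 := by
  unfold pd
  by_cases h : i = 3
  · subst h
    simp [Function.update_self]
  · have h3 : (3 : Fin 4) ≠ i := fun hh => h hh.symm
    simp [h, Function.update_of_ne h3]

lemma dG_eq (i j : Fin 4) (t : ℝ) : deriv (fun s => gMat s i j) t = Gd t i j := by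
  rcases fin4cases i with rfl | rfl | rfl | rfl <;>
    rcases fin4cases j with rfl | rfl | rfl | rfl
  all_goals try simp only [gMat, Gd, Matrix.of_apply, Matrix.cons_val', Matrix.cons_val_zero,
        Matrix.cons_val_one, Matrix.head_cons, Matrix.empty_val', Matrix.cons_val_fin_one,
        Matrix.head_fin_const, Matrix.cons_val_two, Matrix.cons_val_three, Matrix.tail_cons]
  all_goals try simp (disch := fun_prop) only [deriv_add, deriv_div_const, deriv_pow,
        deriv_const', deriv_id'', deriv_mul, deriv_neg, deriv_sub, deriv_const_mul_field', deriv_cm, deriv_cm', deriv_mc]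
  all_goals try norm_num [Matrix.vecHead, Matrix.vecTail]
  all_goals try simp (disch := fun_prop) only [deriv_add, deriv_div_const, deriv_pow,
        deriv_const', deriv_id'', deriv_mul, deriv_neg, deriv_sub, deriv_const_mul_field',
        deriv_cm, deriv_cm', deriv_mc]
  all_goals try norm_num
  all_goals first
    | ring1
    | (simp (disch := fun_prop) [deriv_add, deriv_mul_const_field, deriv_pow]; ring)

lemma dE_eq (b k : Fin 4) (t : ℝ) : deriv (fun s => Ef s b k) t = dE t b k := by
  rcases fin4cases b with rfl | rfl | rfl | rfl <;>
    rcases fin4cases k with rfl | rfl | rfl | rfl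
  all_goals try simp only [Ef, dE, Matrix.of_apply, Matrix.cons_val', Matrix.cons_val_zero,
        Matrix.cons_val_one, Matrix.head_cons, Matrix.empty_val', Matrix.cons_val_fin_one,
        Matrix.head_fin_const, Matrix.cons_val_two, Matrix.cons_val_three, Matrix.tail_cons]
  all_goals try simp (disch := fun_prop) only [deriv_add, deriv_div_const, deriv_pow,
        deriv_const', deriv_id'', deriv_mul, deriv_neg, deriv_sub, deriv_const_mul_field', deriv_cm, deriv_cm', deriv_mc]
  all_goals try norm_num [Matrix.vecHead, Matrix.vecTail]
  all_goals try simp (disch := fun_prop) only [deriv_add, deriv_div_const, deriv_pow,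
        deriv_const', deriv_id'', deriv_mul, deriv_neg, deriv_sub, deriv_const_mul_field',
        deriv_cm, deriv_cm', deriv_mc]
  all_goals try norm_num
  all_goals ring

lemma dN_eq (a b k : Fin 4) (t : ℝ) : deriv (fun s => Nf s a b k) t = dN t a b k := by
  rcases fin4cases a with rfl | rfl | rfl | rfl <;>
    rcases fin4cases b with rfl | rfl | rfl | rfl <;>
      rcases fin4cases k with rfl | rfl | rfl | rfl
  all_goals try simp only [Nf, dN, Matrix.of_apply, Matrix.cons_val', Matrix.cons_val_zero,
        Matrix.cons_val_one, Matrix.head_cons, Matrix.empty_val', Matrix.cons_val_fin_one,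
        Matrix.head_fin_const, Matrix.cons_val_two, Matrix.cons_val_three, Matrix.tail_cons]
  all_goals try simp (disch := fun_prop) only [deriv_add, deriv_div_const, deriv_pow,
        deriv_const', deriv_id'', deriv_mul, deriv_neg, deriv_sub, deriv_const_mul_field', deriv_cm, deriv_cm', deriv_mc]
  all_goals try norm_num [Matrix.vecHead, Matrix.vecTail]
  all_goals try simp (disch := fun_prop) only [deriv_add, deriv_div_const, deriv_pow,
        deriv_const', deriv_id'', deriv_mul, deriv_neg, deriv_sub, deriv_const_mul_field',
        deriv_cm, deriv_cm', deriv_mc]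
  all_goals try norm_num
  all_goals ring

lemma pd_g (i j l : Fin 4) (p : Fin 4 → ℝ) :
    pd i (fun q => gMat (q 3) j l) p = if i = 3 then Gd (p 3) j l else 0 := by
  have h := pd_comp (fun s => gMat s j l) i p
  rw [dG_eq] at h
  exact h

lemma pd_e (i b k : Fin 4) (p : Fin 4 → ℝ) :
    pd i (fun q => eVF b q k) p = if i = 3 then dE (p 3) b k else 0 := by
  have h := pd_comp (fun s => Ef s b k) i p
  rw [dE_eq] at h
  have he : (fun q : Fin 4 → ℝ => eVF b q k) = fun q => Ef (q 3) b k := by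
    funext q; rw [eVF_apply]
  rw [he]
  exact h

lemma pd_N (i a b k : Fin 4) (p : Fin 4 → ℝ) :
    pd i (fun q => Nf (q 3) a b k) p = if i = 3 then dN (p 3) a b k else 0 := by
  have h := pd_comp (fun s => Nf s a b k) i p
  rw [dN_eq] at h
  exact h

/-! ### Inverse metric and Christoffel symbols -/

lemma gMat_inv (t : ℝ) : (gMat t)⁻¹ = Gi t := by
  have h : gMat t * Gi t = 1 := by
    ext i j
    rcases fin4cases i with rfl | rfl | rfl | rfl <;>
      rcases fin4cases j with rfl | rfl | rfl | rfl
    all_goals try simp [gMat, Gi, Matrix.mul_apply, Fin.sum_univ_four, Matrix.one_apply, Matrix.vecHead, Matrix.vecTail]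
    all_goals ring
  exact Matrix.inv_eq_right_inv h

lemma Chr_eq (p : Fin 4 → ℝ) (k i j : Fin 4) : Chr p k i j = Cf (p 3) k i j := by
  unfold Chr
  rw [gMat_inv]
  simp only [pd_g]
  rcases fin4cases k with rfl | rfl | rfl | rfl <;>
    rcases fin4cases i with rfl | rfl | rfl | rfl <;>
      rcases fin4cases j with rfl | rfl | rfl | rfl
  all_goals try simp [Fin.sum_univ_four, Gi, Gd, Cf, Matrix.vecHead, Matrix.vecTail]
  all_goals ring

/-! ### Covariant derivatives of the frame -/

lemma nabla_ee (a b : Fin 4) (p : Fin 4 → ℝ) :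
    nabla (eVF a) (eVF b) p = Nf (p 3) a b := by
  funext k
  unfold nabla
  simp only [pd_e]
  simp only [Chr_eq, eVF_apply]
  rcases fin4cases a with rfl | rfl | rfl | rfl <;>
    rcases fin4cases b with rfl | rfl | rfl | rfl <;>
      rcases fin4cases k with rfl | rfl | rfl | rfl
  all_goals try simp [Fin.sum_univ_four, Ef, dE, Cf, Nf, Matrix.vecHead, Matrix.vecTail]
  all_goals ring

lemma nabla_ee_fun (a b : Fin 4) :
    nabla (eVF a) (eVF b) = fun q => Nf (q 3) a b := funext (nabla_ee a b)

/-! ### Lie brackets of the frame -/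

lemma hasFDerivAt_eVF (b : Fin 4) (p : Fin 4 → ℝ) :
    HasFDerivAt (eVF b)
      (ContinuousLinearMap.pi fun k =>
        dE (p 3) b k • (ContinuousLinearMap.proj 3 : ((Fin 4 → ℝ) →L[ℝ] ℝ))) p := by
  rw [hasFDerivAt_pi']
  intro k
  have hproj : HasFDerivAt (fun q : Fin 4 → ℝ => q 3)
      (ContinuousLinearMap.proj 3 : ((Fin 4 → ℝ) →L[ℝ] ℝ)) p :=
    (ContinuousLinearMap.proj 3 : ((Fin 4 → ℝ) →L[ℝ] ℝ)).hasFDerivAt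
  have hcomp : ∀ k' : Fin 4,
      (ContinuousLinearMap.proj k' : ((Fin 4 → ℝ) →L[ℝ] ℝ)).comp
        (ContinuousLinearMap.pi fun k =>
          dE (p 3) b k • (ContinuousLinearMap.proj 3 : ((Fin 4 → ℝ) →L[ℝ] ℝ)))
      = dE (p 3) b k' • (ContinuousLinearMap.proj 3 : ((Fin 4 → ℝ) →L[ℝ] ℝ)) := by
    intro k'; ext v; simp
  rw [hcomp]
  rcases fin4cases b with rfl | rfl | rfl | rfl <;>
    rcases fin4cases k with rfl | rfl | rfl | rfl
  all_goals try simp only [eVF, dE, Matrix.of_apply, Matrix.cons_val', Matrix.cons_val_zero,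
        Matrix.cons_val_one, Matrix.head_cons, Matrix.empty_val', Matrix.cons_val_fin_one,
        Matrix.head_fin_const, Matrix.cons_val_two, Matrix.cons_val_three, Matrix.tail_cons]
  all_goals first
      | (simpa using (hasFDerivAt_const (1:ℝ) p))
      | (simpa using (hasFDerivAt_const (0:ℝ) p))
      | (simpa using hproj)
      | (have h2 : HasDerivAt (fun s : ℝ => s ^ 2 / 2) (p 3) (p 3) := by
           simpa using (hasDerivAt_pow 2 (p 3)).div_const 2
         simpa [Function.comp_def] using h2.comp_hasFDerivAt p hproj)

lemma bracket_ee (a b : Fin 4) (p : Fin 4 → ℝ) :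
    bracket (eVF a) (eVF b) p = Bf (p 3) a b := by
  unfold bracket
  rw [(hasFDerivAt_eVF b p).fderiv, (hasFDerivAt_eVF a p).fderiv]
  funext k
  simp only [Pi.sub_apply, ContinuousLinearMap.pi_apply, ContinuousLinearMap.smul_apply,
    ContinuousLinearMap.proj_apply, smul_eq_mul, eVF_apply]
  rcases fin4cases a with rfl | rfl | rfl | rfl <;>
    rcases fin4cases b with rfl | rfl | rfl | rfl <;>
      rcases fin4cases k with rfl | rfl | rfl | rfl
  all_goals try simp [Ef, dE, Bf, Matrix.vecHead, Matrix.vecTail]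
  all_goals ring

lemma bracket_ee_fun (a b : Fin 4) :
    bracket (eVF a) (eVF b) = fun q => Bf (q 3) a b := funext (bracket_ee a b)

/-! ### Curvature -/

lemma Riem_eq (a b : Fin 4) (p : Fin 4 → ℝ) :
    Riem (eVF a) (eVF b) (eVF b) p = Rf (p 3) a b := by
  unfold Riem
  rw [nabla_ee_fun b b, nabla_ee_fun a b, bracket_ee_fun a b]
  funext k
  simp only [Pi.sub_apply]
  unfold nabla
  simp only [pd_N, pd_e]
  simp only [Chr_eq, eVF_apply]
  rcases fin4cases a with rfl | rfl | rfl | rfl <;>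
    rcases fin4cases b with rfl | rfl | rfl | rfl <;>
      rcases fin4cases k with rfl | rfl | rfl | rfl
  all_goals try simp [Fin.sum_univ_four, Ef, dE, Cf, Nf, dN, Bf, Rf, Matrix.vecHead, Matrix.vecTail]
  all_goals ring

/-- The scalar curvature of (ℝ⁴, g̃) equals −1 at every point. -/
theorem nil4_scalar_curvature :
    ∀ p : Fin 4 → ℝ,
      (∑ i, ∑ j, gMet p (Riem (eVF i) (eVF j) (eVF j) p) (eVF i p)) = -1 := by
  intro p
  simp only [Fin.sum_univ_four, Riem_eq, eVF_apply]
  unfold gMet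
  simp only [Fin.sum_univ_four]
  simp [gMat, Rf, Ef, Matrix.vecHead, Matrix.vecTail]
  ring
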